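/- Let F be a field, n ≥ 1, s = s_0,…,s_{1-n} over F with linear complexity L satisfying 2L ≤ n. Let (μ, μ') be the output pair of the minimal-solution algorithm with μ_2 μ'_1 − μ_1 μ'_2 = ∇_s ≠ 0. Suppose f = (f_1, f_2) is a solution for s with deg f_1 ≤ n − L and gcd(f_1, f_2) = 1. Then f_1 is a minimal polynomial of s (deg f_1 = L); in fact ∇_s f = m' μ with m' ∈ F^×, where m' = f_2 μ'_1 − f_1 μ'_2. -/

import Mathlib

open Polynomial in
/-- φ of degree d satisfies the annihilating condition for the length-`n` sequence
`s₀, s₋₁, …, s₁₋ₙ` (where `s k` denotes `s₋ₖ`). -/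
def AnnCond {D : Type*} [CommRing D] (n : ℕ) (s : ℕ → D) (φ : Polynomial D) : Prop :=
  ∀ t : ℕ, t + φ.natDegree + 1 ≤ n →
    ∑ j ∈ Finset.range (φ.natDegree + 1), φ.coeff j * s (t + j) = 0

/-- φ is a nonzero annihilating polynomial of the length-`n` sequence `s`. -/
def Annihilates {D : Type*} [CommRing D] (n : ℕ) (s : ℕ → D) (φ : Polynomial D) : Prop :=
  φ ≠ 0 ∧ AnnCond n s φ

/-- Linear complexity: minimal degree of a nonzero annihilating polynomial. -/
noncomputable def LC {D : Type*} [CommRing D] (n : ℕ) (s : ℕ → D) : ℕ :=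
  sInf {d | ∃ φ : Polynomial D, Annihilates n s φ ∧ φ.natDegree = d}

/-- `x·ψ = [φ·s̄]`, the strictly-positive-degree part of `φ·s̄`, expressed coefficientwise. -/
def SeqNum {D : Type*} [CommRing D] (n : ℕ) (s : ℕ → D) (φ ψ : Polynomial D) : Prop :=
  ∀ k : ℕ, ψ.coeff k = ∑ j ∈ Finset.range (φ.natDegree + 1),
    if k + 1 ≤ j ∧ j - (k + 1) < n then φ.coeff j * s (j - (k + 1)) else 0

/-- `(φ, ψ)` is a solution for the length-`n` sequence `s`. -/
def IsSolution {D : Type*} [CommRing D] (n : ℕ) (s : ℕ → D) (φ ψ : Polynomial D) : Prop :=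
  Annihilates n s φ ∧ SeqNum n s φ ψ
/-- Discrepancy `Δ(φ; s₀,…,s₋ₖ)` of `φ` with respect to the length-`(k+1)` prefix:
the coefficient `(φ·t̄)_{deg φ − k}`. -/
noncomputable def disc {D : Type*} [CommRing D] (s : ℕ → D) (k : ℕ) (φ : Polynomial D) : D :=
  ∑ j ∈ Finset.range (φ.natDegree + 1),
    if φ.natDegree ≤ j + k then φ.coeff j * s (j + k - φ.natDegree) else 0
/-- State of the Berlekamp–Massey-type algorithm (Algorithm 4.1):
current minimal solution `μ`, auxiliary previous solution `μ'`,
previous nonzero discrepancy `Δ'₁`, the integer `e`, and the product `∇` of discrepancies. -/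
structure BMState (D : Type*) [CommRing D] where
  mu : Polynomial D × Polynomial D
  mu' : Polynomial D × Polynomial D
  dp : D
  e : ℤ
  nabla : D

open Polynomial in
/-- One iteration of the algorithm, processing the term `s₋ₖ`. -/
noncomputable def bmStep {D : Type*} [CommRing D] [DecidableEq D]
    (s : ℕ → D) (k : ℕ) (st : BMState D) : BMState D :=
  let Δ := disc s k st.mu.1
  if Δ = 0 then { st with e := st.e + 1 }
  else if st.e ≤ 0 then
    { st with
      mu := (C st.dp * st.mu.1 - C Δ * X ^ (-st.e).toNat * st.mu'.1,
             C st.dp * st.mu.2 - C Δ * X ^ (-st.e).toNat * st.mu'.2),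
      nabla := st.dp * st.nabla,
      e := st.e + 1 }
  else
    { mu := (C st.dp * X ^ st.e.toNat * st.mu.1 - C Δ * st.mu'.1,
             C st.dp * X ^ st.e.toNat * st.mu.2 - C Δ * st.mu'.2),
      mu' := st.mu,
      dp := Δ,
      nabla := Δ * st.nabla,
      e := -st.e + 1 }

/-- Running the algorithm on the first `n` terms `s₀, …, s₁₋ₙ`
starting from `μ = (1,0)`, `μ' = (0,−1)`, `Δ'₁ = 1`, `e = 1`, `∇ = 1`. -/
noncomputable def bmRun {D : Type*} [CommRing D] [DecidableEq D] (s : ℕ → D) : ℕ → BMState D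
  | 0 => ⟨(1, 0), (0, -1), 1, 1, 1⟩
  | (k + 1) => bmStep s k (bmRun s k)


namespace BMAux
open Polynomial Finset

variable {F : Type*} [Field F]

noncomputable def sext (n : ℕ) (s : ℕ → F) (i : ℤ) : F :=
  if 0 ≤ i ∧ i < n then s i.toNat else 0

noncomputable def G (n : ℕ) (s : ℕ → F) (φ : Polynomial F) (M : ℕ) (c : ℤ) : F :=
  ∑ j ∈ Finset.range M, φ.coeff j * sext n s (j - c)

noncomputable def Rho (n : ℕ) (s : ℕ → F) (φ ψ : Polynomial F) (M : ℕ) (c : ℤ) : F :=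
  G n s φ M c - (if 1 ≤ c then ψ.coeff (c-1).toNat else 0)

lemma G_congr {n : ℕ} {s : ℕ → F} {φ : Polynomial F} {M M' : ℕ}
    (h : φ.natDegree < M) (h' : M ≤ M') (c : ℤ) :
    G n s φ M' c = G n s φ M c := by
  unfold G
  refine (Finset.sum_subset (Finset.range_subset_range.2 h') ?_).symm
  intro j _ hj
  simp only [Finset.mem_range, not_lt] at hj
  rw [Polynomial.coeff_eq_zero_of_natDegree_lt (by omega), zero_mul]

lemma G_smul (n : ℕ) (s : ℕ → F) (a : F) (φ : Polynomial F) (M : ℕ) (c : ℤ) :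
    G n s (C a * φ) M c = a * G n s φ M c := by
  unfold G
  rw [Finset.mul_sum]
  refine Finset.sum_congr rfl fun j _ => ?_
  rw [Polynomial.coeff_C_mul, mul_assoc]

lemma G_sub (n : ℕ) (s : ℕ → F) (φ φ' : Polynomial F) (M : ℕ) (c : ℤ) :
    G n s (φ - φ') M c = G n s φ M c - G n s φ' M c := by
  unfold G
  rw [← Finset.sum_sub_distrib]
  refine Finset.sum_congr rfl fun j _ => ?_
  rw [Polynomial.coeff_sub, sub_mul]

lemma G_shift (n : ℕ) (s : ℕ → F) (φ : Polynomial F) (M E : ℕ) (hE : E ≤ M) (c : ℤ) :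
    G n s (φ * X ^ E) M c = G n s φ (M - E) (c - E) := by
  unfold G
  rw [Finset.range_eq_Ico, ← Finset.sum_Ico_consecutive _ (Nat.zero_le E) hE]
  have h1 : ∑ j ∈ Finset.Ico 0 E, (φ * X ^ E).coeff j * sext n s (j - c) = 0 := by
    refine Finset.sum_eq_zero fun j hj => ?_
    simp only [Finset.mem_Ico] at hj
    rw [Polynomial.coeff_mul_X_pow', if_neg (by omega), zero_mul]
  rw [h1, zero_add, Finset.sum_Ico_eq_sum_range]
  refine Finset.sum_congr (by rw [Finset.range_eq_Ico]) fun i _ => ?_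
  rw [Polynomial.coeff_mul_X_pow', if_pos (by omega)]
  congr 2
  · omega
  · push_cast; ring


lemma Rho_smul (n : ℕ) (s : ℕ → F) (a : F) (φ ψ : Polynomial F) (M : ℕ) (c : ℤ) :
    Rho n s (C a * φ) (C a * ψ) M c = a * Rho n s φ ψ M c := by
  unfold Rho
  rw [G_smul, mul_sub]
  congr 1
  split_ifs with h
  · rw [Polynomial.coeff_C_mul]
  · rw [mul_zero]

lemma Rho_sub (n : ℕ) (s : ℕ → F) (φ φ' ψ ψ' : Polynomial F) (M : ℕ) (c : ℤ) :
    Rho n s (φ - φ') (ψ - ψ') M c = Rho n s φ ψ M c - Rho n s φ' ψ' M c := by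
  unfold Rho
  rw [G_sub]
  split_ifs with h
  · rw [Polynomial.coeff_sub]; ring
  · ring

lemma Rho_shift (n : ℕ) (s : ℕ → F) (φ ψ : Polynomial F) (E : ℕ)
    (hd : φ.natDegree + E ≤ n) (c : ℤ) :
    Rho n s (φ * X ^ E) (ψ * X ^ E) (n + 1) c = Rho n s φ ψ (n + 1) (c - E) := by
  have hG : G n s (φ * X ^ E) (n + 1) c = G n s φ (n + 1) (c - E) := by
    rw [G_shift n s φ (n+1) E (by omega) c]
    rcases Nat.eq_zero_or_pos E with hE | hE
    · simp [hE]
    · exact (G_congr (by omega) (by omega) _).symm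
  have hpsi : (if 1 ≤ c then (ψ * X ^ E).coeff (c - 1).toNat else 0)
      = (if 1 ≤ c - (E : ℤ) then ψ.coeff (c - E - 1).toNat else 0) := by
    rw [Polynomial.coeff_mul_X_pow']
    by_cases h1 : 1 ≤ c
    · by_cases h2 : 1 ≤ c - (E : ℤ)
      · rw [if_pos h1, if_pos h2, if_pos (by omega)]
        congr 1
        omega
      · rw [if_pos h1, if_neg h2, if_neg (by omega)]
    · rw [if_neg h1, if_neg (by omega)]
  unfold Rho
  rw [hG, hpsi]

lemma ann_of_rho {n K : ℕ} {s : ℕ → F} {φ ψ : Polynomial F} (hK : K ≤ n)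
    (h : ∀ c : ℤ, (φ.natDegree : ℤ) - K < c → Rho n s φ ψ (n + 1) c = 0) :
    AnnCond K s φ := by
  intro t ht
  have h1 := h (-(t : ℤ)) (by omega)
  unfold Rho at h1
  rw [if_neg (by omega), sub_zero] at h1
  rw [← h1, G_congr (n := n) (M := φ.natDegree + 1) (by omega) (by omega)]
  refine Finset.sum_congr rfl fun j hj => ?_
  simp only [Finset.mem_range] at hj
  unfold sext
  rw [if_pos (by constructor <;> omega),
    show ((j:ℤ) - -(t:ℤ)).toNat = t + j from by omega]

lemma seqnum_of_rho {n : ℕ} {s : ℕ → F} {φ ψ : Polynomial F} (hd : φ.natDegree ≤ n)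
    (h : ∀ c : ℤ, 0 < c → Rho n s φ ψ (n + 1) c = 0) :
    SeqNum n s φ ψ := by
  intro k
  have h1 := h ((k : ℤ) + 1) (by omega)
  unfold Rho at h1
  rw [if_pos (by omega), sub_eq_zero] at h1
  have h2 : ((k : ℤ) + 1 - 1).toNat = k := by omega
  rw [h2] at h1
  rw [← h1, G_congr (n := n) (M := φ.natDegree + 1) (by omega) (by omega)]
  refine Finset.sum_congr rfl fun j hj => ?_
  simp only [Finset.mem_range] at hj
  unfold sext
  split_ifs with h3 h4 h4
  · rw [show ((j:ℤ) - ((k:ℤ)+1)).toNat = j - (k+1) from by omega]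
  · exfalso; omega
  · exfalso; omega
  · rw [mul_zero]

lemma disc_eq_rho {n k : ℕ} {s : ℕ → F} (φ ψ : Polynomial F)
    (hdk : φ.natDegree ≤ k) (hk : k < n) :
    Rho n s φ ψ (n + 1) ((φ.natDegree : ℤ) - k) = disc s k φ := by
  unfold Rho
  rw [if_neg (by omega), sub_zero,
    G_congr (n := n) (M := φ.natDegree + 1) (by omega) (by omega)]
  unfold disc
  refine Finset.sum_congr rfl fun j hj => ?_
  simp only [Finset.mem_range] at hj
  rw [if_pos (by omega)]
  unfold sext
  rw [if_pos (by constructor <;> omega),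
    show ((j:ℤ) - ((φ.natDegree:ℤ) - (k:ℤ))).toNat = j + k - φ.natDegree from by omega]


lemma disc_eq_A {k : ℕ} {s : ℕ → F} {φ : Polynomial F} (hdk : φ.natDegree ≤ k) :
    disc s k φ = ∑ j ∈ Finset.range (φ.natDegree + 1), φ.coeff j * s (k - φ.natDegree + j) := by
  unfold disc
  refine Finset.sum_congr rfl fun j hj => ?_
  rw [if_pos (by omega), show j + k - φ.natDegree = k - φ.natDegree + j from by omega]

lemma massey {k : ℕ} {s : ℕ → F} {φ g : Polynomial F} (hφ : AnnCond k s φ)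
    (hdk : φ.natDegree ≤ k) (hΔ : disc s k φ ≠ 0) (hg0 : g ≠ 0)
    (hg : AnnCond (k + 1) s g) :
    k + 1 ≤ φ.natDegree + g.natDegree := by
  by_contra hcon
  push_neg at hcon
  set d := φ.natDegree with hd
  set dg := g.natDegree with hdg
  have hsum : d + dg ≤ k := by omega
  set T := k - d - dg with hT
  have key : ∑ i ∈ Finset.range (dg + 1), g.coeff i *
      ∑ j ∈ Finset.range (d + 1), φ.coeff j * s (T + i + j)
      = g.coeff dg * disc s k φ := by
    rw [Finset.sum_range_succ]
    have h1 : ∀ i ∈ Finset.range dg, g.coeff i *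
        ∑ j ∈ Finset.range (d + 1), φ.coeff j * s (T + i + j) = 0 := by
      intro i hi
      simp only [Finset.mem_range] at hi
      have := hφ (T + i) (by omega)
      rw [this, mul_zero]
    rw [Finset.sum_eq_zero h1, zero_add]
    congr 1
    rw [disc_eq_A hdk]
    refine Finset.sum_congr rfl fun j hj => ?_
    congr 2
    omega
  have key2 : ∑ i ∈ Finset.range (dg + 1), g.coeff i *
      ∑ j ∈ Finset.range (d + 1), φ.coeff j * s (T + i + j) = 0 := by
    have swap : ∑ i ∈ Finset.range (dg + 1), g.coeff i *
        ∑ j ∈ Finset.range (d + 1), φ.coeff j * s (T + i + j)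
        = ∑ j ∈ Finset.range (d + 1), φ.coeff j *
          ∑ i ∈ Finset.range (dg + 1), g.coeff i * s (T + j + i) := by
      simp_rw [Finset.mul_sum]
      rw [Finset.sum_comm]
      refine Finset.sum_congr rfl fun j _ => Finset.sum_congr rfl fun i _ => ?_
      rw [show T + i + j = T + j + i from by omega]
      ring
    rw [swap]
    refine Finset.sum_eq_zero fun j hj => ?_
    simp only [Finset.mem_range] at hj
    have := hg (T + j) (by omega)
    rw [this, mul_zero]
  rw [key2] at key
  rcases mul_eq_zero.1 key.symm with h | h
  · exact hg0 (Polynomial.leadingCoeff_eq_zero.1 h)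
  · exact hΔ h

lemma annihilates_X_pow (K : ℕ) (s : ℕ → F) : Annihilates K s ((X : Polynomial F) ^ K) := by
  refine ⟨pow_ne_zero _ Polynomial.X_ne_zero, fun t ht => ?_⟩
  exact absurd ht (by rw [Polynomial.natDegree_X_pow]; omega)

lemma lc_nonempty (K : ℕ) (s : ℕ → F) :
    {d | ∃ φ : Polynomial F, Annihilates K s φ ∧ φ.natDegree = d}.Nonempty :=
  ⟨K, (X : Polynomial F) ^ K, annihilates_X_pow K s, Polynomial.natDegree_X_pow K⟩

lemma lc_le {K : ℕ} {s : ℕ → F} {φ : Polynomial F} (h : Annihilates K s φ) :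
    LC K s ≤ φ.natDegree :=
  Nat.sInf_le ⟨φ, h, rfl⟩

lemma lc_spec (K : ℕ) (s : ℕ → F) :
    ∃ φ : Polynomial F, Annihilates K s φ ∧ φ.natDegree = LC K s :=
  Nat.sInf_mem (lc_nonempty K s)

lemma annCond_mono {K K' : ℕ} {s : ℕ → F} {φ : Polynomial F}
    (h : AnnCond K' s φ) (hK : K ≤ K') : AnnCond K s φ :=
  fun t ht => h t (by omega)

lemma lc_mono (K : ℕ) (s : ℕ → F) : LC K s ≤ LC (K + 1) s := by
  obtain ⟨φ, hφ, hdeg⟩ := lc_spec (K + 1) s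
  rw [← hdeg]
  exact lc_le ⟨hφ.1, annCond_mono hφ.2 (Nat.le_succ K)⟩

lemma lc_lower {k : ℕ} {s : ℕ → F} {φ : Polynomial F} (hφ : AnnCond k s φ)
    (hdk : φ.natDegree ≤ k) (hΔ : disc s k φ ≠ 0) :
    k + 1 ≤ φ.natDegree + LC (k + 1) s := by
  obtain ⟨g, hg, hdeg⟩ := lc_spec (k + 1) s
  rw [← hdeg]
  exact massey hφ hdk hΔ hg.1 hg.2


lemma prod_coeff {n : ℕ} {s : ℕ → F} (φ ψ χ : Polynomial F) (hs : SeqNum n s φ ψ)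
    (hd : φ.natDegree + χ.natDegree ≤ n) (k : ℕ) :
    (ψ * χ).coeff k = ∑ i ∈ Finset.range (χ.natDegree + 1), ∑ j ∈ Finset.range (φ.natDegree + 1),
      (if k + 1 ≤ i + j ∧ i ≤ k then χ.coeff i * (φ.coeff j * s (i + j - (k + 1))) else 0) := by
  set R := k + χ.natDegree + 2 with hR
  have step1 : (ψ * χ).coeff k = ∑ i ∈ Finset.range R,
      (if i ≤ k then χ.coeff i * ψ.coeff (k - i) else 0) := by
    rw [mul_comm, Polynomial.coeff_mul, Finset.Nat.sum_antidiagonal_eq_sum_range_succ_mk]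
    have e1 : ∑ i ∈ Finset.range (k + 1), χ.coeff i * ψ.coeff (k - i)
        = ∑ i ∈ Finset.range (k + 1), (if i ≤ k then χ.coeff i * ψ.coeff (k - i) else 0) := by
      refine Finset.sum_congr rfl fun i hi => ?_
      simp only [Finset.mem_range] at hi
      rw [if_pos (by omega)]
    rw [e1]
    refine Finset.sum_subset (Finset.range_subset_range.2 (by omega)) ?_
    intro i _ hi
    simp only [Finset.mem_range, not_lt] at hi
    rw [if_neg (by omega)]
  rw [step1]
  have step2 : ∀ i ∈ Finset.range R, (if i ≤ k then χ.coeff i * ψ.coeff (k - i) else 0)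
      = ∑ j ∈ Finset.range (φ.natDegree + 1),
        (if k + 1 ≤ i + j ∧ i ≤ k then χ.coeff i * (φ.coeff j * s (i + j - (k + 1))) else 0) := by
    intro i _
    by_cases hik : i ≤ k
    · rw [if_pos hik, hs (k - i), Finset.mul_sum]
      refine Finset.sum_congr rfl fun j hj => ?_
      simp only [Finset.mem_range] at hj
      by_cases hχ : χ.natDegree < i
      · rw [Polynomial.coeff_eq_zero_of_natDegree_lt hχ]
        split_ifs <;> simp
      · push_neg at hχ
        by_cases hg : k - i + 1 ≤ j ∧ j - (k - i + 1) < n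
        · rw [if_pos hg, if_pos (by omega),
            show j - (k - i + 1) = i + j - (k + 1) from by omega]
        · rw [if_neg hg, mul_zero, if_neg (by omega)]
    · rw [if_neg hik]
      exact (Finset.sum_eq_zero fun j _ => if_neg (by omega)).symm
  rw [Finset.sum_congr rfl step2]
  refine (Finset.sum_subset (Finset.range_subset_range.2 (by omega)) ?_).symm
  intro i _ hi
  simp only [Finset.mem_range, not_lt] at hi
  refine Finset.sum_eq_zero fun j _ => ?_
  rw [Polynomial.coeff_eq_zero_of_natDegree_lt (by omega)]
  split_ifs <;> simp

lemma two_sol {n : ℕ} {s : ℕ → F} {f₁ f₂ g₁ g₂ : Polynomial F}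
    (hf1 : AnnCond n s f₁) (hf2 : SeqNum n s f₁ f₂)
    (hg1 : AnnCond n s g₁) (hg2 : SeqNum n s g₁ g₂)
    (hdeg : f₁.natDegree + g₁.natDegree ≤ n) :
    f₂ * g₁ = f₁ * g₂ := by
  ext k
  rw [prod_coeff f₁ f₂ g₁ hf2 hdeg k]
  rw [show f₁ * g₂ = g₂ * f₁ from mul_comm _ _, prod_coeff g₁ g₂ f₁ hg2 (by omega) k]
  conv_rhs => rw [Finset.sum_comm]
  set dg := g₁.natDegree
  set df := f₁.natDegree
  have rhs_eq : ∑ a ∈ Finset.range (dg + 1), ∑ b ∈ Finset.range (df + 1),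
      (if k + 1 ≤ b + a ∧ b ≤ k then f₁.coeff b * (g₁.coeff a * s (b + a - (k + 1))) else 0)
      = ∑ a ∈ Finset.range (dg + 1), ∑ b ∈ Finset.range (df + 1),
      (if k + 1 ≤ a + b ∧ b ≤ k then g₁.coeff a * (f₁.coeff b * s (a + b - (k + 1))) else 0) := by
    refine Finset.sum_congr rfl fun a _ => Finset.sum_congr rfl fun b _ => ?_
    rw [show b + a = a + b from by omega]
    ring_nf
  rw [rhs_eq]
  have Sg : ∑ a ∈ Finset.range (dg + 1), ∑ b ∈ Finset.range (df + 1),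
      (if k + 1 ≤ a then g₁.coeff a * (f₁.coeff b * s (a + b - (k + 1))) else 0) = 0 := by
    refine Finset.sum_eq_zero fun a ha => ?_
    simp only [Finset.mem_range] at ha
    by_cases hka : k + 1 ≤ a
    · have hann := hf1 (a - (k + 1)) (by omega)
      have e2 : ∑ b ∈ Finset.range (df + 1), (if k + 1 ≤ a then g₁.coeff a * (f₁.coeff b * s (a + b - (k + 1))) else 0)
          = g₁.coeff a * ∑ b ∈ Finset.range (df + 1), f₁.coeff b * s (a - (k + 1) + b) := by
        rw [Finset.mul_sum]
        refine Finset.sum_congr rfl fun b _ => ?_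
        rw [if_pos hka, show a + b - (k + 1) = a - (k + 1) + b from by omega]
      rw [e2, hann, mul_zero]
    · exact Finset.sum_eq_zero fun b _ => if_neg hka
  have Sf : ∑ a ∈ Finset.range (dg + 1), ∑ b ∈ Finset.range (df + 1),
      (if k + 1 ≤ b then g₁.coeff a * (f₁.coeff b * s (a + b - (k + 1))) else 0) = 0 := by
    rw [Finset.sum_comm]
    refine Finset.sum_eq_zero fun b hb => ?_
    simp only [Finset.mem_range] at hb
    by_cases hkb : k + 1 ≤ b
    · have hann := hg1 (b - (k + 1)) (by omega)
      have e2 : ∑ a ∈ Finset.range (dg + 1), (if k + 1 ≤ b then g₁.coeff a * (f₁.coeff b * s (a + b - (k + 1))) else 0)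
          = f₁.coeff b * ∑ a ∈ Finset.range (dg + 1), g₁.coeff a * s (b - (k + 1) + a) := by
        rw [Finset.mul_sum]
        refine Finset.sum_congr rfl fun a _ => ?_
        rw [if_pos hkb, show a + b - (k + 1) = b - (k + 1) + a from by omega]
        ring
      rw [e2, hann, mul_zero]
    · exact Finset.sum_eq_zero fun a _ => if_neg hkb
  have key : (∑ a ∈ Finset.range (dg + 1), ∑ b ∈ Finset.range (df + 1),
        (if k + 1 ≤ a + b ∧ a ≤ k then g₁.coeff a * (f₁.coeff b * s (a + b - (k + 1))) else 0))
      + (∑ a ∈ Finset.range (dg + 1), ∑ b ∈ Finset.range (df + 1),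
        (if k + 1 ≤ a then g₁.coeff a * (f₁.coeff b * s (a + b - (k + 1))) else 0))
      = (∑ a ∈ Finset.range (dg + 1), ∑ b ∈ Finset.range (df + 1),
        (if k + 1 ≤ a + b ∧ b ≤ k then g₁.coeff a * (f₁.coeff b * s (a + b - (k + 1))) else 0))
      + (∑ a ∈ Finset.range (dg + 1), ∑ b ∈ Finset.range (df + 1),
        (if k + 1 ≤ b then g₁.coeff a * (f₁.coeff b * s (a + b - (k + 1))) else 0)) := by
    rw [← Finset.sum_add_distrib, ← Finset.sum_add_distrib]
    refine Finset.sum_congr rfl fun a _ => ?_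
    rw [← Finset.sum_add_distrib, ← Finset.sum_add_distrib]
    refine Finset.sum_congr rfl fun b _ => ?_
    split_ifs <;> first | omega | ring
  rw [Sg, add_zero, Sf, add_zero] at key
  exact key


lemma G_zero (n : ℕ) (s : ℕ → F) (M : ℕ) (c : ℤ) : G n s 0 M c = 0 := by
  unfold G; simp

lemma G_one (n : ℕ) (s : ℕ → F) {M : ℕ} (hM : 0 < M) (c : ℤ) :
    G n s 1 M c = sext n s (-c) := by
  unfold G
  rw [Finset.sum_eq_single 0]
  · rw [Polynomial.coeff_one, if_pos rfl, one_mul]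
    congr 1
    omega
  · intro j _ hj
    rw [Polynomial.coeff_one, if_neg hj, zero_mul]
  · intro h0
    exact absurd (Finset.mem_range.2 hM) h0

variable [DecidableEq F]

def Inv (n : ℕ) (s : ℕ → F) (k : ℕ) (st : BMState F) : Prop :=
  ∃ m : ℤ,
    st.mu.1 ≠ 0 ∧
    st.mu.1.natDegree ≤ LC k s ∧
    (∀ c : ℤ, (st.mu.1.natDegree : ℤ) - k < c → Rho n s st.mu.1 st.mu.2 (n + 1) c = 0) ∧
    (∀ c : ℤ, (st.mu'.1.natDegree : ℤ) - m < c → Rho n s st.mu'.1 st.mu'.2 (n + 1) c = 0) ∧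
    Rho n s st.mu'.1 st.mu'.2 (n + 1) ((st.mu'.1.natDegree : ℤ) - m) = st.dp ∧
    ((st.mu.1.natDegree : ℤ) + (st.mu'.1.natDegree : ℤ) = m + 1) ∧
    (st.e = (k : ℤ) + 1 - 2 * (st.mu.1.natDegree : ℤ)) ∧
    (m < (k : ℤ)) ∧
    st.dp ≠ 0 ∧ st.nabla ≠ 0 ∧
    st.mu.2 * st.mu'.1 - st.mu.1 * st.mu'.2 = Polynomial.C st.nabla

lemma inv_zero (n : ℕ) (s : ℕ → F) : Inv n s 0 (bmRun s 0) := by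
  have hrun : bmRun s 0 = (⟨(1, 0), (0, -1), 1, 1, 1⟩ : BMState F) := rfl
  rw [hrun]
  refine ⟨-1, one_ne_zero, ?_, ?_, ?_, ?_, ?_, ?_, ?_, one_ne_zero, one_ne_zero, ?_⟩
  · simp
  · intro c hc
    simp only [Polynomial.natDegree_one] at hc
    unfold Rho
    rw [G_one n s (by omega) c]
    unfold sext
    rw [if_neg (by omega)]
    simp
  · intro c hc
    simp only [Polynomial.natDegree_zero] at hc
    unfold Rho
    rw [G_zero, if_pos (by omega)]
    have : ((c - 1).toNat : ℕ) ≠ 0 := by omega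
    rw [show ((-1 : Polynomial F)).coeff (c-1).toNat = 0 by
      rw [Polynomial.coeff_neg, Polynomial.coeff_one, if_neg this]; ring]
    ring
  · unfold Rho
    simp only [Polynomial.natDegree_zero]
    simp only [G_zero, show (1:ℤ) ≤ ((0:ℕ):ℤ) - -1 by omega, if_true]
    rw [show ((((0:ℕ):ℤ) - -1 - 1).toNat) = 0 by omega]
    rw [Polynomial.coeff_neg, Polynomial.coeff_one, if_pos rfl]
    ring
  · simp
  · simp
  · omega
  · simp

lemma inv_step (n : ℕ) (s : ℕ → F) (k : ℕ) (hk : k + 1 ≤ n)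
    (h : Inv n s k (bmRun s k)) : Inv n s (k + 1) (bmRun s (k + 1)) := by
  obtain ⟨m, hμ0, hlc, hRμ, hRμ', hRdp, hdd, he, hmk, hdp, hnab, hdet⟩ := h
  set st := bmRun s k with hst
  set d := st.mu.1.natDegree with hd
  set d' := st.mu'.1.natDegree with hd'
  have hd'0 : (0:ℤ) ≤ (d' : ℤ) := by positivity
  have hdk : d ≤ k := by omega
  have hdn : d ≤ n := by omega
  have hrun : bmRun s (k + 1) = bmStep s k st := rfl
  set Δ := disc s k st.mu.1 with hΔdef
  have hdisc : Rho n s st.mu.1 st.mu.2 (n + 1) ((d : ℤ) - k) = Δ :=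
    disc_eq_rho _ _ hdk (by omega)
  by_cases hΔ0 : Δ = 0
  · -- no change branch
    have hstep : bmRun s (k + 1) = { st with e := st.e + 1 } := by
      rw [hrun]; simp only [bmStep]; rw [if_pos hΔ0]
    rw [hstep]
    have item3 : ∀ c : ℤ, (d : ℤ) - (k + 1) < c → Rho n s st.mu.1 st.mu.2 (n + 1) c = 0 := by
      intro c hc
      have hge : (d : ℤ) - k ≤ c := by omega
      rcases hge.lt_or_eq with hlt | heq
      · exact hRμ c hlt
      · rw [← heq, hdisc]; exact hΔ0
    exact ⟨m, hμ0, hlc.trans (lc_mono k s), fun c hc => item3 c (by push_cast at hc ⊢; omega),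
      hRμ', hRdp, hdd, by push_cast; push_cast at he; omega, by push_cast; omega,
      hdp, hnab, hdet⟩
  · by_cases he0 : st.e ≤ 0
    · -- non-jump update branch
      set E := (-st.e).toNat with hEdef
      have hE : (E : ℤ) = 2 * (d : ℤ) - k - 1 := by omega
      have hstep : bmRun s (k + 1) = { st with
          mu := (Polynomial.C st.dp * st.mu.1 - Polynomial.C Δ * Polynomial.X ^ E * st.mu'.1,
                 Polynomial.C st.dp * st.mu.2 - Polynomial.C Δ * Polynomial.X ^ E * st.mu'.2),
          nabla := st.dp * st.nabla,
          e := st.e + 1 } := by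
        rw [hrun]; simp only [bmStep]; rw [if_neg hΔ0, if_pos he0]
      rw [hstep]
      have hdeg2 : (Polynomial.C Δ * Polynomial.X ^ E * st.mu'.1).natDegree < d := by
        calc (Polynomial.C Δ * Polynomial.X ^ E * st.mu'.1).natDegree
            ≤ (Polynomial.C Δ * Polynomial.X ^ E).natDegree + d' := Polynomial.natDegree_mul_le
          _ ≤ (Polynomial.C Δ).natDegree + (Polynomial.X ^ E : Polynomial F).natDegree + d' :=
              by gcongr; exact Polynomial.natDegree_mul_le
          _ = E + d' := by rw [Polynomial.natDegree_C, Polynomial.natDegree_X_pow]; omega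
          _ < d := by omega
      have hnd1 : (Polynomial.C st.dp * st.mu.1).natDegree = d :=
        Polynomial.natDegree_C_mul hdp
      have hnewd : (Polynomial.C st.dp * st.mu.1
          - Polynomial.C Δ * Polynomial.X ^ E * st.mu'.1).natDegree = d := by
        rw [Polynomial.natDegree_sub_eq_left_of_natDegree_lt (by rw [hnd1]; exact hdeg2), hnd1]
      have hnew0 : Polynomial.C st.dp * st.mu.1
          - Polynomial.C Δ * Polynomial.X ^ E * st.mu'.1 ≠ 0 := by
        intro h0
        rw [sub_eq_zero] at h0
        rw [← h0, hnd1] at hdeg2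
        omega
      have hshift_pre : st.mu'.1.natDegree + E ≤ n := by omega
      have hRnew : ∀ c : ℤ,
          Rho n s (Polynomial.C st.dp * st.mu.1 - Polynomial.C Δ * Polynomial.X ^ E * st.mu'.1)
            (Polynomial.C st.dp * st.mu.2 - Polynomial.C Δ * Polynomial.X ^ E * st.mu'.2)
            (n + 1) c
          = st.dp * Rho n s st.mu.1 st.mu.2 (n + 1) c
            - Δ * Rho n s st.mu'.1 st.mu'.2 (n + 1) (c - E) := by
        intro c
        rw [show Polynomial.C Δ * Polynomial.X ^ E * st.mu'.1
            = Polynomial.C Δ * (st.mu'.1 * Polynomial.X ^ E) from by ring,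
          show Polynomial.C Δ * Polynomial.X ^ E * st.mu'.2
            = Polynomial.C Δ * (st.mu'.2 * Polynomial.X ^ E) from by ring,
          Rho_sub, Rho_smul, Rho_smul, Rho_shift n s _ _ E hshift_pre c]
      have item3 : ∀ c : ℤ, (d : ℤ) - (k + 1) < c →
          Rho n s (Polynomial.C st.dp * st.mu.1 - Polynomial.C Δ * Polynomial.X ^ E * st.mu'.1)
            (Polynomial.C st.dp * st.mu.2 - Polynomial.C Δ * Polynomial.X ^ E * st.mu'.2)
            (n + 1) c = 0 := by
        intro c hc
        rw [hRnew c]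
        have hge : (d : ℤ) - k ≤ c := by omega
        rcases hge.lt_or_eq with hlt | heq
        · rw [hRμ c hlt, hRμ' (c - E) (by omega), mul_zero, mul_zero, sub_zero]
        · rw [← heq, hdisc, show (d : ℤ) - k - E = (d' : ℤ) - m from by omega, hRdp]
          ring
      refine ⟨m, hnew0, ?_, ?_, hRμ', hRdp, ?_, ?_, by push_cast; omega,
        hdp, mul_ne_zero hdp hnab, ?_⟩
      · rw [hnewd]; exact hlc.trans (lc_mono k s)
      · intro c hc
        rw [hnewd] at hc
        exact item3 c (by push_cast at hc ⊢; omega)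
      · rw [hnewd]; exact hdd
      · rw [hnewd]; push_cast; push_cast at he; omega
      · rw [show st.dp * st.nabla = st.dp * st.nabla from rfl, map_mul]
        linear_combination Polynomial.C st.dp * hdet
    · -- jump branch
      set E := st.e.toNat with hEdef
      have hE : (E : ℤ) = (k : ℤ) + 1 - 2 * (d : ℤ) := by omega
      have hstep : bmRun s (k + 1) = { st with
          mu := (Polynomial.C st.dp * Polynomial.X ^ E * st.mu.1 - Polynomial.C Δ * st.mu'.1,
                 Polynomial.C st.dp * Polynomial.X ^ E * st.mu.2 - Polynomial.C Δ * st.mu'.2),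
          mu' := st.mu,
          dp := Δ,
          nabla := Δ * st.nabla,
          e := -st.e + 1 } := by
        rw [hrun]; simp only [bmStep]; rw [if_neg hΔ0, if_neg he0]
      rw [hstep]
      have hE1 : 1 ≤ E := by omega
      have hnd1 : (Polynomial.C st.dp * Polynomial.X ^ E * st.mu.1).natDegree = E + d := by
        rw [mul_assoc, Polynomial.natDegree_C_mul hdp,
          Polynomial.natDegree_mul (pow_ne_zero E Polynomial.X_ne_zero) hμ0, Polynomial.natDegree_X_pow]
      have hdeg2 : (Polynomial.C Δ * st.mu'.1).natDegree < E + d := by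
        calc (Polynomial.C Δ * st.mu'.1).natDegree
            ≤ (Polynomial.C Δ).natDegree + d' := Polynomial.natDegree_mul_le
          _ = d' := by rw [Polynomial.natDegree_C]; omega
          _ < E + d := by omega
      have hnewd : (Polynomial.C st.dp * Polynomial.X ^ E * st.mu.1
          - Polynomial.C Δ * st.mu'.1).natDegree = E + d := by
        rw [Polynomial.natDegree_sub_eq_left_of_natDegree_lt (by rw [hnd1]; exact hdeg2), hnd1]
      have hnew0 : Polynomial.C st.dp * Polynomial.X ^ E * st.mu.1
          - Polynomial.C Δ * st.mu'.1 ≠ 0 := by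
        intro h0
        rw [sub_eq_zero] at h0
        rw [← h0, hnd1] at hdeg2
        omega
      have hshift_pre : st.mu.1.natDegree + E ≤ n := by omega
      have hRnew : ∀ c : ℤ,
          Rho n s (Polynomial.C st.dp * Polynomial.X ^ E * st.mu.1 - Polynomial.C Δ * st.mu'.1)
            (Polynomial.C st.dp * Polynomial.X ^ E * st.mu.2 - Polynomial.C Δ * st.mu'.2)
            (n + 1) c
          = st.dp * Rho n s st.mu.1 st.mu.2 (n + 1) (c - E)
            - Δ * Rho n s st.mu'.1 st.mu'.2 (n + 1) c := by
        intro c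
        rw [show Polynomial.C st.dp * Polynomial.X ^ E * st.mu.1
            = Polynomial.C st.dp * (st.mu.1 * Polynomial.X ^ E) from by ring,
          show Polynomial.C st.dp * Polynomial.X ^ E * st.mu.2
            = Polynomial.C st.dp * (st.mu.2 * Polynomial.X ^ E) from by ring,
          Rho_sub, Rho_smul, Rho_smul, Rho_shift n s _ _ E hshift_pre c]
      have item3 : ∀ c : ℤ, ((E + d : ℕ) : ℤ) - (k + 1) < c →
          Rho n s (Polynomial.C st.dp * Polynomial.X ^ E * st.mu.1 - Polynomial.C Δ * st.mu'.1)
            (Polynomial.C st.dp * Polynomial.X ^ E * st.mu.2 - Polynomial.C Δ * st.mu'.2)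
            (n + 1) c = 0 := by
        intro c hc
        rw [hRnew c]
        push_cast at hc
        have hge : (d : ℤ) - k ≤ c - E := by omega
        rcases hge.lt_or_eq with hlt | heq
        · rw [hRμ (c - E) hlt, hRμ' c (by omega), mul_zero, mul_zero, sub_zero]
        · rw [← heq, hdisc, show c = (d' : ℤ) - m from by omega, hRdp]
          ring
      have hann : AnnCond k s st.mu.1 := ann_of_rho (by omega) hRμ
      have hmassey : k + 1 ≤ d + LC (k + 1) s := lc_lower hann hdk hΔ0
      refine ⟨k, hnew0, ?_, ?_, ?_, ?_, ?_, ?_, by push_cast; omega,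
        hΔ0, mul_ne_zero hΔ0 hnab, ?_⟩
      · rw [hnewd]; omega
      · intro c hc
        rw [hnewd] at hc
        exact item3 c hc
      · intro c hc
        exact hRμ c (by push_cast at hc ⊢; omega)
      · rw [show ((st.mu.1.natDegree : ℤ)) = (d : ℤ) from rfl, hdisc]
      · rw [hnewd]; push_cast; omega
      · rw [hnewd]; push_cast; push_cast at he; omega
      · rw [map_mul]
        linear_combination Polynomial.C Δ * hdet

lemma inv_all (n : ℕ) (s : ℕ → F) : ∀ k, k ≤ n → Inv n s k (bmRun s k) := by
  intro k
  induction k with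
  | zero => exact fun _ => inv_zero n s
  | succ k ih => exact fun hk => inv_step n s k hk (ih (by omega))

end BMAux


open Polynomial in
/-- If `2L ≤ n`, `f` is a solution for `s` with `deg f₁ ≤ n − L` and
`gcd(f₁,f₂) = 1`, then `f₁` is a minimal polynomial of `s`; in fact
`∇ₛ f = m' μ` with `m' ∈ F^×`. -/
theorem minimal_of_coprime_solution {F : Type*} [Field F] [DecidableEq F]
    (n : ℕ) (hn : 1 ≤ n) (s : ℕ → F) (h2L : 2 * LC n s ≤ n)
    (f₁ f₂ : Polynomial F) (hf : IsSolution n s f₁ f₂)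
    (hdeg : f₁.natDegree ≤ n - LC n s) (hcop : IsCoprime f₁ f₂) :
    f₁.natDegree = LC n s ∧
      (∃ c : F, c ≠ 0 ∧ f₂ * (bmRun s n).mu'.1 - f₁ * (bmRun s n).mu'.2 = C c) ∧
      C (bmRun s n).nabla * f₁ =
        (f₂ * (bmRun s n).mu'.1 - f₁ * (bmRun s n).mu'.2) * (bmRun s n).mu.1 ∧
      C (bmRun s n).nabla * f₂ =
        (f₂ * (bmRun s n).mu'.1 - f₁ * (bmRun s n).mu'.2) * (bmRun s n).mu.2 := by
  classical
  obtain ⟨m, hμ0, hlc, hRμ, hRμ', hRdp, hdd, he, hmk, hdp, hnab, hdet⟩ :=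
    BMAux.inv_all n s n le_rfl
  set st := bmRun s n with hst
  set L := LC n s with hL
  have hLn : L ≤ n := by omega
  have hdn : st.mu.1.natDegree ≤ n := hlc.trans hLn
  have hann : AnnCond n s st.mu.1 := BMAux.ann_of_rho le_rfl hRμ
  have hseq : SeqNum n s st.mu.1 st.mu.2 :=
    BMAux.seqnum_of_rho hdn (fun c hc => hRμ c (by omega))
  have hm0 : f₂ * st.mu.1 = f₁ * st.mu.2 :=
    BMAux.two_sol hf.1.2 hf.2 hann hseq (by omega)
  set m' := f₂ * st.mu'.1 - f₁ * st.mu'.2 with hm'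
  have h3 : Polynomial.C st.nabla * f₁ = m' * st.mu.1 := by
    rw [hm']
    linear_combination (-f₁) * hdet + (-(st.mu'.1)) * hm0
  have h4 : Polynomial.C st.nabla * f₂ = m' * st.mu.2 := by
    rw [hm']
    linear_combination (-f₂) * hdet + (-(st.mu'.2)) * hm0
  obtain ⟨a, b, hab⟩ := hcop
  have hq : m' * (a * st.mu.1 + b * st.mu.2) = Polynomial.C st.nabla := by
    linear_combination (-a) * h3 + (-b) * h4 + (Polynomial.C st.nabla) * hab
  have hm'0 : m' ≠ 0 := by
    intro h0
    rw [h0, zero_mul] at hq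
    exact hnab (Polynomial.C_eq_zero.1 hq.symm)
  have hqne : a * st.mu.1 + b * st.mu.2 ≠ 0 := by
    intro h0
    rw [h0, mul_zero] at hq
    exact hnab (Polynomial.C_eq_zero.1 hq.symm)
  have hdeg0 : m'.natDegree = 0 := by
    have hmul := Polynomial.natDegree_mul hm'0 hqne
    rw [hq, Polynomial.natDegree_C] at hmul
    omega
  have hceq : m' = Polynomial.C (m'.coeff 0) := Polynomial.eq_C_of_natDegree_eq_zero hdeg0
  have hc0 : m'.coeff 0 ≠ 0 := by
    intro h0
    exact hm'0 (by rw [hceq, h0, map_zero])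
  have hf1L : f₁.natDegree = L := by
    have hdf_ge : L ≤ f₁.natDegree := BMAux.lc_le hf.1
    have hnd : (Polynomial.C st.nabla * f₁).natDegree = (m' * st.mu.1).natDegree := by rw [h3]
    rw [Polynomial.natDegree_C_mul hnab, hceq, Polynomial.natDegree_C_mul hc0] at hnd
    omega
  exact ⟨hf1L, ⟨m'.coeff 0, hc0, hceq ▸ rfl⟩, h3, h4⟩
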